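/- Let T > 0 and let J : [0, T] → (real 3×3 matrices) be continuous with J(t)_{ij} < 0 for all i ≠ j and all t ∈ [0, T]. Suppose W : [0, T] → (real 3×3 matrices) satisfies the matrix linear ODE W'(t) = J(t)·W(t) (entrywise) for all t ∈ [0, T], with W(0) equal to the identity matrix. Then W(T) is invertible and every entry of W(T)⁻¹ is strictly positive. -/

import Mathlib

open Set Filter Topology Matrix

lemma det3_deriv {W : ℝ → Matrix (Fin 3) (Fin 3) ℝ} {t : ℝ} {A : Matrix (Fin 3) (Fin 3) ℝ}
    (hW : ∀ i j : Fin 3, HasDerivAt (fun s => W s i j) ((A * W t) i j) t) :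
    HasDerivAt (fun s => (W s).det) ((A 0 0 + A 1 1 + A 2 2) * (W t).det) t := by
  simp only [Matrix.det_fin_three]
  convert ((((((hW 0 0).mul (hW 1 1)).mul (hW 2 2)).sub
      (((hW 0 0).mul (hW 1 2)).mul (hW 2 1))).sub
      (((hW 0 1).mul (hW 1 0)).mul (hW 2 2))).add
      (((hW 0 1).mul (hW 1 2)).mul (hW 2 0))).add
      ((((hW 0 2).mul (hW 1 0)).mul (hW 2 1)).sub
      (((hW 0 2).mul (hW 1 1)).mul (hW 2 0))) using 1
  · rfl
  · rfl
  · funext s; simp only [Pi.mul_apply, Pi.sub_apply, Pi.add_apply]; ring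
  · simp only [Matrix.mul_apply, Fin.sum_univ_three, Pi.mul_apply]
    ring

lemma adj3_deriv {W : ℝ → Matrix (Fin 3) (Fin 3) ℝ} {t : ℝ} {A : Matrix (Fin 3) (Fin 3) ℝ}
    (hW : ∀ i j : Fin 3, HasDerivAt (fun s => W s i j) ((A * W t) i j) t)
    (i j : Fin 3) :
    HasDerivAt (fun s => (W s).adjugate i j)
      ((A 0 0 + A 1 1 + A 2 2) * (W t).adjugate i j
        - ((W t).adjugate i 0 * A 0 j + (W t).adjugate i 1 * A 1 j
            + (W t).adjugate i 2 * A 2 j)) t := by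
  fin_cases i <;> fin_cases j <;>
    simp only [Matrix.adjugate_fin_three, Matrix.cons_val', Matrix.cons_val_zero,
      Matrix.cons_val_one, Matrix.head_cons, Matrix.head_fin_const, Matrix.empty_val',
      Matrix.cons_val_fin_one, Fin.zero_eta, Fin.mk_one, Fin.isValue] <;>
    [ (convert ((hW 1 1).mul (hW 2 2)).sub ((hW 1 2).mul (hW 2 1)) using 1; rfl; rfl; rfl);
      (convert (((hW 0 1).mul (hW 2 2)).neg).add ((hW 0 2).mul (hW 2 1)) using 1; rfl; rfl; rfl);
      (convert ((hW 0 1).mul (hW 1 2)).sub ((hW 0 2).mul (hW 1 1)) using 1; rfl; rfl; rfl);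
      (convert (((hW 1 0).mul (hW 2 2)).neg).add ((hW 1 2).mul (hW 2 0)) using 1; rfl; rfl; rfl);
      (convert ((hW 0 0).mul (hW 2 2)).sub ((hW 0 2).mul (hW 2 0)) using 1; rfl; rfl; rfl);
      (convert (((hW 0 0).mul (hW 1 2)).neg).add ((hW 0 2).mul (hW 1 0)) using 1; rfl; rfl; rfl);
      (convert ((hW 1 0).mul (hW 2 1)).sub ((hW 1 1).mul (hW 2 0)) using 1; rfl; rfl; rfl);
      (convert (((hW 0 0).mul (hW 2 1)).neg).add ((hW 0 1).mul (hW 2 0)) using 1; rfl; rfl; rfl);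
      (convert ((hW 0 0).mul (hW 1 1)).sub ((hW 0 1).mul (hW 1 0)) using 1; rfl; rfl; rfl)] <;>
  · simp [Matrix.mul_apply, Fin.sum_univ_three]
    ring

lemma pos_aux (T : ℝ) (hT : 0 < T) (B : ℝ → Matrix (Fin 3) (Fin 3) ℝ)
    (hB : ∀ t ∈ Set.Icc (0:ℝ) T, ∀ k j : Fin 3, 0 < B t k j)
    (y : ℝ → Fin 3 → ℝ) (i : Fin 3)
    (hy : ∀ t ∈ Set.Icc (0:ℝ) T, ∀ j : Fin 3,
      HasDerivAt (fun s => y s j) (∑ k, y t k * B t k j) t)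
    (hy0 : ∀ j, 0 ≤ y 0 j) (hy0i : 1 ≤ y 0 i) :
    ∀ j, 0 < y T j := by
  have hcont : ∀ j, ContinuousOn (fun s => y s j) (Set.Icc 0 T) := by
    intro j t ht
    exact ((hy t ht j).continuousAt).continuousWithinAt
  have mono : ∀ u ∈ Set.Icc (0:ℝ) T, (∀ s ∈ Set.Icc (0:ℝ) u, ∀ j, 0 ≤ y s j) →
      ∀ j, MonotoneOn (fun s => y s j) (Set.Icc 0 u) := by
    intro u hu hnn j
    have hsub : Set.Icc (0:ℝ) u ⊆ Set.Icc 0 T := Set.Icc_subset_Icc le_rfl hu.2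
    refine monotoneOn_of_deriv_nonneg (convex_Icc 0 u) ((hcont j).mono hsub) ?_ ?_
    · intro x hx
      rw [interior_Icc] at hx
      exact ((hy x (hsub (Set.Ioo_subset_Icc_self hx)) j).differentiableAt).differentiableWithinAt
    · intro x hx
      rw [interior_Icc] at hx
      have hx' := Set.Ioo_subset_Icc_self hx
      rw [(hy x (hsub hx') j).deriv]
      refine Finset.sum_nonneg fun k _ => ?_
      exact mul_nonneg (hnn x hx' k) (hB x (hsub hx') k j).le
  set S : Set ℝ := {t | t ∈ Set.Icc (0:ℝ) T ∧ ∀ s ∈ Set.Icc (0:ℝ) t, ∀ j, 0 ≤ y s j} with hS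
  have h0S : (0:ℝ) ∈ S := by
    refine ⟨⟨le_rfl, hT.le⟩, fun s hs j => ?_⟩
    have : s = 0 := le_antisymm hs.2 hs.1
    rw [this]; exact hy0 j
  have hbdd : BddAbove S := ⟨T, fun x hx => hx.1.2⟩
  obtain ⟨τ, hτ⟩ : ∃ τ, τ = sSup S := ⟨_, rfl⟩
  have hτmem : τ ∈ Set.Icc (0:ℝ) T := by
    rw [hτ]
    exact ⟨le_csSup hbdd h0S, csSup_le ⟨0, h0S⟩ fun x hx => hx.1.2⟩
  have hτnn : ∀ s ∈ Set.Icc (0:ℝ) τ, ∀ j, 0 ≤ y s j := by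
    have hlt : ∀ s, 0 ≤ s → s < τ → ∀ j, 0 ≤ y s j := by
      intro s hs0 hsτ j
      obtain ⟨u, huS, hsu⟩ := exists_lt_of_lt_csSup ⟨0, h0S⟩ (hτ ▸ hsτ)
      exact huS.2 s ⟨hs0, hsu.le⟩ j
    intro s hs j
    rcases lt_or_eq_of_le hs.2 with h | h
    · exact hlt s hs.1 h j
    · rw [h]
      rcases eq_or_lt_of_le hτmem.1 with h0 | h0
      · rw [← h0]; exact hy0 j
      · have hne : (𝓝[Set.Ico (0:ℝ) τ] τ).NeBot := by
          refine mem_closure_iff_nhdsWithin_neBot.mp ?_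
          rw [closure_Ico h0.ne]
          exact ⟨h0.le, le_rfl⟩
        have htend : Tendsto (fun s' => y s' j) (𝓝[Set.Ico (0:ℝ) τ] τ) (𝓝 (y τ j)) :=
          ((hy τ hτmem j).continuousAt).continuousWithinAt
        refine ge_of_tendsto htend ?_
        filter_upwards [self_mem_nhdsWithin] with x hx
        exact hlt x hx.1 hx.2 j
  have hmonoτ := mono τ hτmem hτnn
  have hτT : τ = T := by
    by_contra hne
    have hτlt : τ < T := lt_of_le_of_ne hτmem.2 hne
    have hFne : (𝓝[Set.Ioc τ T] τ).NeBot := by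
      refine mem_closure_iff_nhdsWithin_neBot.mp ?_
      rw [closure_Ioc hτlt.ne]
      exact ⟨le_rfl, hτlt.le⟩
    have hFle : 𝓝[Set.Ioc τ T] τ ≤ 𝓝[≠] τ :=
      nhdsWithin_mono τ fun x hx => (ne_of_gt hx.1)
    have hyiτ : 1 ≤ y τ i :=
      hy0i.trans (hmonoτ i ⟨le_rfl, hτmem.1⟩ ⟨hτmem.1, le_rfl⟩ hτmem.1)
    have evj : ∀ j, ∀ᶠ t in 𝓝[Set.Ioc τ T] τ, 0 < y t j := by
      intro j
      rcases lt_or_eq_of_le (hτnn τ ⟨hτmem.1, le_rfl⟩ j) with hpos | hzero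
      · have := ((hy τ hτmem j).continuousAt).tendsto.eventually (eventually_gt_nhds hpos)
        exact this.filter_mono nhdsWithin_le_nhds
      · have hDpos : 0 < ∑ k, y τ k * B τ k j := by
          have h1 : y τ i * B τ i j ≤ ∑ k, y τ k * B τ k j := by
            refine Finset.single_le_sum (f := fun k => y τ k * B τ k j)
              (fun k _ => mul_nonneg (hτnn τ ⟨hτmem.1, le_rfl⟩ k) (hB τ hτmem k j).le)
              (Finset.mem_univ i)
          have h2 : 0 < B τ i j := hB τ hτmem i j
          nlinarith
        have hslope := (hasDerivAt_iff_tendsto_slope.mp (hy τ hτmem j)).eventually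
          (eventually_gt_nhds hDpos)
        have hslope' := hslope.filter_mono hFle
        filter_upwards [hslope', self_mem_nhdsWithin] with t h1 h2
        have h3 : slope (fun s => y s j) τ t = (y t j - y τ j) / (t - τ) :=
          slope_def_field _ _ _
        rw [h3, ← hzero, sub_zero] at h1
        have h4 : 0 < t - τ := sub_pos.mpr h2.1
        have h5 := mul_pos h1 h4
        rwa [div_mul_cancel₀ _ h4.ne'] at h5
    have evAll : ∀ᶠ t in 𝓝[Set.Ioc τ T] τ, ∀ j, 0 < y t j := by
      filter_upwards [evj 0, evj 1, evj 2] with t h0 h1 h2 j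
      fin_cases j <;> assumption
    obtain ⟨U, hUnhds, hUsub⟩ := eventually_nhdsWithin_iff.mp evAll |>.exists_mem
    obtain ⟨δ, hδpos, hball⟩ := Metric.mem_nhds_iff.mp hUnhds
    set t' := min (τ + δ/2) T with ht'
    have hτt' : τ < t' := lt_min (by linarith) hτlt
    have ht'T : t' ≤ T := min_le_right _ _
    have ht'S : t' ∈ S := by
      refine ⟨⟨hτmem.1.trans hτt'.le, ht'T⟩, fun s hs j => ?_⟩
      rcases le_or_gt s τ with hsτ | hsτ
      · exact hτnn s ⟨hs.1, hsτ⟩ j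
      · have hsU : s ∈ U := by
          apply hball
          rw [Metric.mem_ball, Real.dist_eq, abs_of_pos (sub_pos.mpr hsτ)]
          have : s ≤ τ + δ/2 := hs.2.trans (min_le_left _ _)
          linarith
        exact (hUsub s hsU ⟨hsτ, hs.2.trans ht'T⟩ j).le
    have hle : t' ≤ τ := hτ ▸ le_csSup hbdd ht'S
    exact absurd hle (not_le.mpr hτt')
  rw [hτT] at hτnn hmonoτ
  intro j
  have hstrict : StrictMonoOn (fun s => y s j) (Set.Icc 0 T) := by
    refine strictMonoOn_of_deriv_pos (convex_Icc 0 T) (hcont j) ?_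
    intro x hx
    rw [interior_Icc] at hx
    have hx' := Set.Ioo_subset_Icc_self hx
    rw [(hy x hx' j).deriv]
    have hyix : 1 ≤ y x i :=
      hy0i.trans (hmonoτ i ⟨le_rfl, hT.le⟩ hx' hx'.1)
    have h1 : y x i * B x i j ≤ ∑ k, y x k * B x k j :=
      Finset.single_le_sum (f := fun k => y x k * B x k j)
        (fun k _ => mul_nonneg (hτnn x hx' k) (hB x hx' k j).le) (Finset.mem_univ i)
    have h2 : 0 < B x i j := hB x hx' i j
    nlinarith
  have hlt := hstrict ⟨le_rfl, hT.le⟩ ⟨hT.le, le_rfl⟩ hT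
  have h0 := hy0 j
  simp only at hlt
  linarith

/-- If `J : [0,T] → M₃(ℝ)` is continuous with strictly negative
off-diagonal entries and `W` solves the matrix variational equation `W' = J(t) W` on
`[0, T]` with `W 0 = I`, then `W T` is invertible and every entry of `(W T)⁻¹` is
strictly positive. -/
theorem stmt_17 (T : ℝ) (hT : 0 < T) (J : ℝ → Matrix (Fin 3) (Fin 3) ℝ)
    (hJc : ContinuousOn J (Set.Icc 0 T))
    (hJoff : ∀ t ∈ Set.Icc (0 : ℝ) T, ∀ i j : Fin 3, i ≠ j → J t i j < 0)
    (W : ℝ → Matrix (Fin 3) (Fin 3) ℝ)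
    (hW : ∀ t ∈ Set.Icc (0 : ℝ) T, ∀ i j : Fin 3,
      HasDerivAt (fun s => W s i j) ((J t * W t) i j) t)
    (hW0 : W 0 = 1) :
    IsUnit (W T) ∧ ∀ i j : Fin 3, 0 < (W T)⁻¹ i j := by
  have hTmem : T ∈ Set.Icc (0:ℝ) T := ⟨hT.le, le_rfl⟩
  -- continuity of entries of J
  have hJe : ∀ i j : Fin 3, ContinuousOn (fun t => J t i j) (Set.Icc 0 T) := fun i j =>
    (continuous_apply j).comp_continuousOn ((continuous_apply i).comp_continuousOn hJc)
  -- trace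
  have htrc : ContinuousOn (fun t => J t 0 0 + J t 1 1 + J t 2 2) (Set.Icc 0 T) :=
    ((hJe 0 0).add (hJe 1 1)).add (hJe 2 2)
  -- uniform bound on entries
  obtain ⟨M, hM0, hM⟩ : ∃ M, 0 ≤ M ∧ ∀ t ∈ Set.Icc (0:ℝ) T, ∀ i j : Fin 3, |J t i j| ≤ M := by
    have hg : ContinuousOn (fun t => ∑ i : Fin 3, ∑ j : Fin 3, |J t i j|) (Set.Icc 0 T) := by
      refine continuousOn_finset_sum _ fun i _ => continuousOn_finset_sum _ fun j _ => (hJe i j).abs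
    obtain ⟨C, hC⟩ := isCompact_Icc.exists_bound_of_continuousOn hg
    have key : ∀ t ∈ Set.Icc (0:ℝ) T, ∀ i j : Fin 3,
        |J t i j| ≤ C := by
      intro t ht i j
      have h1 : |J t i j| ≤ ∑ j' : Fin 3, |J t i j'| :=
        Finset.single_le_sum (f := fun j' => |J t i j'|) (fun _ _ => abs_nonneg _)
          (Finset.mem_univ j)
      have h2 : (∑ j' : Fin 3, |J t i j'|) ≤ ∑ i' : Fin 3, ∑ j' : Fin 3, |J t i' j'| :=
        Finset.single_le_sum (f := fun i' => ∑ j' : Fin 3, |J t i' j'|)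
          (fun _ _ => Finset.sum_nonneg fun _ _ => abs_nonneg _) (Finset.mem_univ i)
      have h3 := hC t ht
      rw [Real.norm_eq_abs] at h3
      have h4 : (∑ i' : Fin 3, ∑ j' : Fin 3, |J t i' j'|) ≤ C :=
        (le_abs_self _).trans h3
      linarith
    exact ⟨C, (abs_nonneg _).trans (key 0 ⟨le_rfl, hT.le⟩ 0 0), key⟩
  -- clamp function and global continuous extension of the trace
  set cl : ℝ → ℝ := fun u => max 0 (min u T) with hcl
  have hclc : Continuous cl := continuous_const.max (continuous_id.min continuous_const)
  have hclmem : ∀ u, cl u ∈ Set.Icc (0:ℝ) T := fun u =>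
    ⟨le_max_left _ _, max_le hT.le (min_le_right _ _)⟩
  have hclid : ∀ u ∈ Set.Icc (0:ℝ) T, cl u = u := by
    intro u hu
    simp only [hcl, min_eq_left hu.2, max_eq_right hu.1]
  set q : ℝ → ℝ := fun u => J (cl u) 0 0 + J (cl u) 1 1 + J (cl u) 2 2 with hq
  have hqc : Continuous q := htrc.comp_continuous hclc hclmem
  set φ : ℝ → ℝ := fun x => ∫ u in (0:ℝ)..x, q u with hφdef
  have hφ : ∀ x, HasDerivAt φ (q x) x := fun x =>
    (hqc.integral_hasStrictDerivAt 0 x).hasDerivAt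
  -- positivity of the determinant
  have hd : ∀ t ∈ Set.Icc (0:ℝ) T,
      HasDerivAt (fun s => (W s).det) ((J t 0 0 + J t 1 1 + J t 2 2) * (W t).det) t :=
    fun t ht => det3_deriv (hW t ht)
  have hg2 : ∀ t ∈ Set.Icc (0:ℝ) T,
      HasDerivAt (fun s => (W s).det * Real.exp (-φ s)) 0 t := by
    intro t ht
    have h1 : HasDerivAt (fun s => Real.exp (-φ s)) (Real.exp (-φ t) * -(q t)) t :=
      ((hφ t).neg).exp
    have h2 := (hd t ht).mul h1
    convert h2 using 1
    rfl; rfl; rfl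
    have h3 : q t = J t 0 0 + J t 1 1 + J t 2 2 := by
      show J (cl t) 0 0 + J (cl t) 1 1 + J (cl t) 2 2 = _
      rw [hclid t ht]
    rw [h3]; ring
  have hconst := constant_of_has_deriv_right_zero
    (f := fun s => (W s).det * Real.exp (-φ s)) (a := 0) (b := T)
    (fun t ht => ((hg2 t ht).continuousAt).continuousWithinAt)
    (fun x hx => (hg2 x (Set.Ico_subset_Icc_self hx)).hasDerivWithinAt)
  have hg20 : (W 0).det * Real.exp (-φ 0) = 1 := by
    simp [hW0, hφdef, intervalIntegral.integral_same]
  have hdpos : ∀ x ∈ Set.Icc (0:ℝ) T, 0 < (W x).det := by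
    intro x hx
    have h1 := hconst x hx
    rw [hg20] at h1
    have he : 0 < Real.exp (-φ x) := Real.exp_pos _
    nlinarith
  have hdT := hdpos T hTmem
  have hdet_unit : IsUnit (W T).det := isUnit_iff_ne_zero.mpr hdT.ne'
  refine ⟨(Matrix.isUnit_iff_isUnit_det _).mpr hdet_unit, ?_⟩
  intro i j
  -- positivity of the adjugate via pos_aux
  have hadj : 0 < (W T).adjugate i j := by
    set c : ℝ := 4 * M + 1 with hc
    set B : ℝ → Matrix (Fin 3) (Fin 3) ℝ := fun t => Matrix.of fun k l =>
      (if k = l then c + (J t 0 0 + J t 1 1 + J t 2 2) else 0) - J t k l with hB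
    have hBpos : ∀ t ∈ Set.Icc (0:ℝ) T, ∀ k l : Fin 3, 0 < B t k l := by
      intro t ht k l
      rcases eq_or_ne k l with h | h
      · subst h
        simp only [hB, Matrix.of_apply, if_pos rfl, if_true]
        have h00 := abs_le.mp (hM t ht 0 0)
        have h11 := abs_le.mp (hM t ht 1 1)
        have h22 := abs_le.mp (hM t ht 2 2)
        have hkk := abs_le.mp (hM t ht k k)
        have hcge : c = 4 * M + 1 := hc
        linarith [h00.1, h11.1, h22.1, hkk.2]
      · simp only [hB, Matrix.of_apply, if_neg h]
        have := hJoff t ht k l h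
        linarith
    have hy : ∀ t ∈ Set.Icc (0:ℝ) T, ∀ l : Fin 3,
        HasDerivAt (fun s => Real.exp (c * s) * (W s).adjugate i l)
          (∑ k, (Real.exp (c * t) * (W t).adjugate i k) * B t k l) t := by
      intro t ht l
      have hexp : HasDerivAt (fun s => Real.exp (c * s)) (Real.exp (c * t) * (c * 1)) t :=
        ((hasDerivAt_id t).const_mul c).exp
      have hadjd := adj3_deriv (hW t ht) i l
      have h := hexp.mul hadjd
      convert h using 1
      rfl; rfl; rfl
      fin_cases l <;>
        simp only [hB, Matrix.of_apply, Fin.sum_univ_three, Fin.reduceFinMk, Fin.isValue] <;>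
        norm_num [Fin.ext_iff] <;> ring
    have hy0 : ∀ l, 0 ≤ Real.exp (c * 0) * (W 0).adjugate i l := by
      intro l
      rw [hW0, Matrix.adjugate_one]
      rcases eq_or_ne i l with h | h
      · subst h; simp [Matrix.one_apply]
      · simp [Matrix.one_apply, h]
    have hy0i : (1:ℝ) ≤ Real.exp (c * 0) * (W 0).adjugate i i := by
      rw [hW0, Matrix.adjugate_one]
      simp [Matrix.one_apply]
    have hpos := pos_aux T hT B hBpos
      (fun s l => Real.exp (c * s) * (W s).adjugate i l) i hy hy0 hy0i j
    have hepos : 0 < Real.exp (c * T) := Real.exp_pos _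
    nlinarith
  rw [Matrix.inv_def, Ring.inverse_eq_inv]
  rw [Matrix.smul_apply, smul_eq_mul]
  exact mul_pos (inv_pos.mpr hdT) hadj
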